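/- For n sufficiently large and n ≥ k² ≥ 0.8·n, there exists an (n, k²)-proper code in which any two distinct codewords are at Hamming distance at least 2k+1. -/

import Mathlib

set_option maxHeartbeats 1000000

section AuxProperCode

lemma aux_sum_choose_le (n r : ℕ) : ∑ i ∈ Finset.range (r+1), n.choose i ≤ (n+1)^r := by
  induction r with
  | zero => simp
  | succ r ih =>
    rw [Finset.sum_range_succ, pow_succ]
    have h1 : n.choose (r+1) ≤ n^(r+1) :=
      le_trans (Nat.choose_le_descFactorial n (r+1)) (Nat.descFactorial_le_pow n (r+1))
    have h2 : n^(r+1) ≤ n * (n+1)^r := by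
      rw [pow_succ, mul_comm]
      exact Nat.mul_le_mul_left n (Nat.pow_le_pow_left (Nat.le_succ n) r)
    calc ∑ i ∈ Finset.range (r+1), n.choose i + n.choose (r+1)
        ≤ (n+1)^r + n * (n+1)^r := Nat.add_le_add ih (le_trans h1 h2)
      _ = (n+1)^r * (n+1) := by ring

lemma aux_card_subsets (n r : ℕ) :
    ((Finset.univ : Finset (Finset (Fin n))).filter fun E => E.card ≤ r).card ≤ (n+1)^r := by
  have heq : ((Finset.univ : Finset (Finset (Fin n))).filter fun E => E.card ≤ r)
      = (Finset.range (r+1)).biUnion (fun i => Finset.univ.powersetCard i) := by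
    ext E
    simp [Finset.mem_powersetCard, Nat.lt_succ_iff]
  rw [heq]
  calc ((Finset.range (r+1)).biUnion (fun i => (Finset.univ : Finset (Fin n)).powersetCard i)).card
      ≤ ∑ i ∈ Finset.range (r+1), ((Finset.univ : Finset (Fin n)).powersetCard i).card :=
        Finset.card_biUnion_le
    _ = ∑ i ∈ Finset.range (r+1), n.choose i := by
        apply Finset.sum_congr rfl
        intro i _
        rw [Finset.card_powersetCard, Finset.card_univ, Fintype.card_fin]
    _ ≤ (n+1)^r := aux_sum_choose_le n r

lemma aux_card_ball_le (n r : ℕ) (w : Fin n → Bool) :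
    (Finset.univ.filter fun v : Fin n → Bool =>
      (Finset.univ.filter fun ℓ => v ℓ ≠ w ℓ).card ≤ r).card ≤ (n+1)^r := by
  classical
  refine le_trans (Finset.card_le_card_of_injOn
    (fun v => Finset.univ.filter fun ℓ => v ℓ ≠ w ℓ) ?_ ?_) (aux_card_subsets n r)
  · intro v hv
    simp only [Finset.mem_coe, Finset.mem_filter, Finset.mem_univ, true_and] at hv ⊢
    exact hv
  · intro v hv v' hv' heq
    funext ℓ
    have h1 : (v ℓ ≠ w ℓ) ↔ (v' ℓ ≠ w ℓ) := by
      have := Finset.ext_iff.mp heq ℓ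
      simpa using this
    cases hv1 : v ℓ <;> cases hv2 : v' ℓ <;> cases hw : w ℓ <;> simp_all

lemma aux_card_supp_ge (n : ℕ) (S : Finset (Fin n)) :
    2 ^ S.card ≤ (Finset.univ.filter fun v : Fin n → Bool => ∀ ℓ, v ℓ = true → ℓ ∈ S).card := by
  classical
  have heq : (2:ℕ) ^ S.card = (Finset.univ : Finset ({ℓ // ℓ ∈ S} → Bool)).card := by
    rw [Finset.card_univ, Fintype.card_fun, Fintype.card_coe, Fintype.card_bool]
  rw [heq]
  apply Finset.card_le_card_of_injOn
    (fun f => (fun ℓ => if h : ℓ ∈ S then f ⟨ℓ, h⟩ else false))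
  · intro f _
    simp only [Finset.mem_coe, Finset.mem_filter, Finset.mem_univ, true_and]
    intro ℓ hℓ
    by_contra hne
    simp [hne] at hℓ
  · intro f _ f' _ heq
    funext ⟨ℓ, hℓ⟩
    have := congrFun heq ℓ
    simpa [hℓ] using this

lemma aux_greedy (n k : ℕ) (hcount : Nat.choose n (k^2) * (n+1)^(2*k) < 2^(k^2))
    (A : Finset {S : Finset (Fin n) // S.card = k^2}) :
    ∃ x : {S : Finset (Fin n) // S.card = k^2} → (Fin n → Bool),
      (∀ S, ∀ ℓ : Fin n, x S ℓ = true → ℓ ∈ S.1) ∧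
      (∀ S ∈ A, ∀ T ∈ A, S ≠ T →
        2 * k + 1 ≤ (Finset.univ.filter fun ℓ : Fin n => x S ℓ ≠ x T ℓ).card) := by
  classical
  induction A using Finset.induction_on with
  | empty =>
    exact ⟨fun _ _ => false, fun S ℓ h => by simp at h, fun S hS => by simp at hS⟩
  | @insert S A hSA ih =>
    obtain ⟨x, hsupp, hdist⟩ := ih
    set G := Finset.univ.filter fun v : Fin n → Bool => ∀ ℓ, v ℓ = true → ℓ ∈ S.1 with hG
    set Bad := A.biUnion (fun T => G.filter fun v =>
      (Finset.univ.filter fun ℓ => v ℓ ≠ x T ℓ).card ≤ 2*k) with hBad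
    have hcardBad : Bad.card < G.card := by
      have h1 : Bad.card ≤ A.card * (n+1)^(2*k) := by
        refine le_trans Finset.card_biUnion_le ?_
        rw [← Finset.sum_const_nat (m := (n+1)^(2*k)) (fun T hT => rfl)] at *
        · apply Finset.sum_le_sum
          intro T _
          refine le_trans (Finset.card_le_card
            (Finset.filter_subset_filter _ (Finset.subset_univ G))) ?_
          exact aux_card_ball_le n (2*k) (x T)
      have h2 : A.card ≤ Nat.choose n (k^2) := by
        have := Finset.card_le_univ A
        rwa [Fintype.card_finset_len, Fintype.card_fin] at this
      have h3 : (2:ℕ)^(k^2) ≤ G.card := by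
        have := aux_card_supp_ge n S.1
        rwa [S.2] at this
      calc Bad.card ≤ A.card * (n+1)^(2*k) := h1
        _ ≤ Nat.choose n (k^2) * (n+1)^(2*k) := Nat.mul_le_mul_right _ h2
        _ < 2^(k^2) := hcount
        _ ≤ G.card := h3
    obtain ⟨v, hvG, hvBad⟩ : ∃ v ∈ G, v ∉ Bad := by
      by_contra h
      push_neg at h
      exact absurd (Finset.card_le_card h) (not_le.mpr hcardBad)
    have hvsupp : ∀ ℓ, v ℓ = true → ℓ ∈ S.1 := by
      simpa [hG] using hvG
    have hvfar : ∀ T ∈ A, 2*k + 1 ≤ (Finset.univ.filter fun ℓ => v ℓ ≠ x T ℓ).card := by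
      intro T hT
      by_contra h
      push_neg at h
      apply hvBad
      rw [hBad]
      exact Finset.mem_biUnion.mpr ⟨T, hT, Finset.mem_filter.mpr ⟨hvG, Nat.lt_succ_iff.mp h⟩⟩
    refine ⟨Function.update x S v, ?_, ?_⟩
    · intro T ℓ h
      by_cases hTS : T = S
      · subst hTS
        rw [Function.update_self] at h
        exact hvsupp ℓ h
      · rw [Function.update_of_ne hTS] at h
        exact hsupp T ℓ h
    · intro S' hS' T' hT' hne
      have symm_card : ∀ a b : Fin n → Bool,
          (Finset.univ.filter fun ℓ => a ℓ ≠ b ℓ).card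
            = (Finset.univ.filter fun ℓ => b ℓ ≠ a ℓ).card := by
        intro a b
        congr 1
        apply Finset.filter_congr
        intro ℓ _
        simp [ne_comm]
      rcases Finset.mem_insert.mp hS' with rfl | hS'A
      · rcases Finset.mem_insert.mp hT' with rfl | hT'A
        · exact absurd rfl hne
        · have hTne : T' ≠ S' := fun h => hSA (h ▸ hT'A)
          rw [Function.update_self, Function.update_of_ne hTne]
          exact hvfar T' hT'A
      · rcases Finset.mem_insert.mp hT' with rfl | hT'A
        · have hSne : S' ≠ T' := fun h => hSA (h ▸ hS'A)
          rw [Function.update_of_ne hSne, Function.update_self]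
          rw [symm_card]
          exact hvfar S' hS'A
        · have h1 : S' ≠ S := fun h => hSA (h ▸ hS'A)
          have h2 : T' ≠ S := fun h => hSA (h ▸ hT'A)
          rw [Function.update_of_ne h1, Function.update_of_ne h2]
          exact hdist S' hS'A T' hT'A hne

lemma aux_choose_le_exp (n m : ℕ) (h5 : 5*m ≤ n) :
    (n.choose m : ℝ) ≤ Real.exp (((n:ℝ)/5) * (Real.log 5 + 1)) := by
  have hlog5 : (1:ℝ) ≤ Real.log 5 := by
    rw [Real.le_log_iff_exp_le (by norm_num)]
    calc Real.exp 1 ≤ 2.7182818286 := Real.exp_one_lt_d9.le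
      _ ≤ 5 := by norm_num
  rcases Nat.eq_zero_or_pos m with rfl | hm
  · simp only [Nat.choose_zero_right, Nat.cast_one]
    rw [← Real.exp_zero]
    apply Real.exp_le_exp.mpr
    positivity
  · have hmR : (0:ℝ) < m := by exact_mod_cast hm
    have hnR : (0:ℝ) < n := by
      have : 0 < n := by omega
      exact_mod_cast this
    have h5R : 5 * (m:ℝ) ≤ n := by exact_mod_cast h5
    have h1 : (n.choose m : ℝ) * (m.factorial : ℝ) ≤ (n:ℝ)^m := by
      have h := Nat.descFactorial_le_pow n m
      rw [Nat.descFactorial_eq_factorial_mul_choose] at h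
      have h' := (Nat.cast_le (α := ℝ)).mpr h
      push_cast at h'
      linarith [h']
    have hfac : (0:ℝ) < (m.factorial : ℝ) := by exact_mod_cast m.factorial_pos
    have hmm : (0:ℝ) < (m:ℝ)^m := by positivity
    have h3 : (n.choose m : ℝ) ≤ (n:ℝ)^m * Real.exp m / (m:ℝ)^m := by
      rw [le_div_iff₀ hmm]
      calc (n.choose m : ℝ) * (m:ℝ)^m
          = (n.choose m : ℝ) * ((m:ℝ)^m / (m.factorial:ℝ)) * (m.factorial:ℝ) := by
            field_simp
        _ ≤ (n.choose m : ℝ) * Real.exp m * (m.factorial:ℝ) := by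
            have hh : (n.choose m : ℝ) * ((m:ℝ)^m / (m.factorial:ℝ))
                ≤ (n.choose m : ℝ) * Real.exp m :=
              mul_le_mul_of_nonneg_left
                (Real.pow_div_factorial_le_exp (x := (m:ℝ)) (by positivity) m)
                (by positivity)
            exact mul_le_mul_of_nonneg_right hh hfac.le
        _ = (n.choose m : ℝ) * (m.factorial:ℝ) * Real.exp m := by ring
        _ ≤ (n:ℝ)^m * Real.exp m := mul_le_mul_of_nonneg_right h1 (Real.exp_pos _).le
    refine le_trans h3 ?_
    have h4 : (n:ℝ)^m * Real.exp m / (m:ℝ)^m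
        = Real.exp ((m:ℝ) * Real.log n + m - m * Real.log m) := by
      rw [Real.exp_sub, Real.exp_add]
      rw [← Real.exp_log hnR, ← Real.exp_log hmR, ← Real.exp_nat_mul, ← Real.exp_nat_mul]
      simp [Real.exp_log hnR, Real.exp_log hmR]
    rw [h4]
    apply Real.exp_le_exp.mpr
    have hkey : Real.log n - Real.log m ≤ Real.log 5 + ((n:ℝ)/(5*m) - 1) := by
      have e1 : Real.log n - Real.log m = Real.log ((n:ℝ)/m) :=
        (Real.log_div hnR.ne' hmR.ne').symm
      have e2 : (n:ℝ)/m = 5 * ((n:ℝ)/(5*m)) := by field_simp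
      have e3 : Real.log ((n:ℝ)/m) = Real.log 5 + Real.log ((n:ℝ)/(5*m)) := by
        rw [e2, Real.log_mul (by norm_num) (by positivity)]
      have e4 : Real.log ((n:ℝ)/(5*m)) ≤ (n:ℝ)/(5*m) - 1 :=
        Real.log_le_sub_one_of_pos (by positivity)
      rw [e1, e3]
      linarith
    have hkey2 : (m:ℝ) * (Real.log n - Real.log m) ≤ m * Real.log 5 + ((n:ℝ)/5 - m) := by
      have hmul := mul_le_mul_of_nonneg_left hkey hmR.le
      have e5 : (m:ℝ) * ((n:ℝ)/(5*m)) = (n:ℝ)/5 := by field_simp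
      nlinarith [hmul]
    have hmle : (m:ℝ) ≤ (n:ℝ)/5 := by linarith
    nlinarith [hkey2, hmle, hlog5]

lemma aux_countBound : ∃ N : ℕ, ∀ n : ℕ, N ≤ n → ∀ k : ℕ, k^2 ≤ n → 4*n ≤ 5*k^2 →
    Nat.choose n (k^2) * (n+1)^(2*k) < 2^(k^2) := by
  have hlog2 : (0.6931471803 : ℝ) < Real.log 2 := Real.log_two_gt_d9
  set c : ℝ := 2 * Real.log 2 - 5/4 with hc
  have hcpos : 0 < c := by rw [hc]; linarith
  have hlog5 : Real.log 5 ≤ 2 * Real.log 2 + 1/4 := by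
    have e2 : Real.log 5 = Real.log 4 + Real.log (5/4) := by
      rw [← Real.log_mul (by norm_num) (by norm_num)]; norm_num
    have e3 : Real.log 4 = 2 * Real.log 2 := by
      rw [show (4:ℝ) = 2^2 by norm_num, Real.log_pow]
      push_cast; ring
    have e4 : Real.log (5/4) ≤ 5/4 - 1 := Real.log_le_sub_one_of_pos (by norm_num)
    rw [e2, e3]; linarith
  have hlo := (isLittleO_log_rpow_atTop (show (0:ℝ) < 1/2 by norm_num)).def
    (show (0:ℝ) < c/100 by positivity)
  rw [Filter.eventually_atTop] at hlo
  obtain ⟨x₀, hx₀⟩ := hlo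
  obtain ⟨N₀, hN₀⟩ : ∃ N₀ : ℕ, x₀ ≤ N₀ := exists_nat_ge x₀
  refine ⟨N₀ + 2, fun n hn k hk2 hk45 => ?_⟩
  have hn2 : 2 ≤ n := by omega
  have hnR : (2:ℝ) ≤ n := by exact_mod_cast hn2
  have hnpos : (0:ℝ) < n := by linarith
  have hsq : Real.sqrt n * Real.sqrt n = n := Real.mul_self_sqrt hnpos.le
  have hsqnn : 0 ≤ Real.sqrt n := Real.sqrt_nonneg _
  have hlogn : Real.log n ≤ (c/100) * Real.sqrt n := by
    have h := hx₀ (n:ℝ) (by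
      have : (N₀:ℝ) ≤ n := by exact_mod_cast (by omega : N₀ ≤ n)
      linarith)
    rw [Real.norm_eq_abs, Real.norm_eq_abs] at h
    have h2 : |(n:ℝ) ^ (1/2:ℝ)| = Real.sqrt n := by
      rw [abs_of_nonneg (Real.rpow_nonneg hnpos.le _), ← Real.sqrt_eq_rpow]
    rw [h2] at h
    exact le_trans (le_abs_self _) h
  have hlogn1 : Real.log ((n:ℝ)+1) ≤ 2 * Real.log n := by
    have h1 : ((n:ℝ)+1) ≤ (n:ℝ)^2 := by nlinarith
    calc Real.log ((n:ℝ)+1) ≤ Real.log ((n:ℝ)^2) :=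
          Real.log_le_log (by positivity) h1
      _ = 2 * Real.log n := by rw [Real.log_pow]; push_cast; ring
  have hlogn1nn : 0 ≤ Real.log ((n:ℝ)+1) := Real.log_nonneg (by linarith)
  have hkR : (k:ℝ) ≤ Real.sqrt n :=
    Real.le_sqrt_of_sq_le (by exact_mod_cast hk2)
  have hm5 : 5 * (n - k^2) ≤ n := by omega
  have hchoose := aux_choose_le_exp n (n - k^2) hm5
  have hsymm : Nat.choose n (k^2) = Nat.choose n (n - k^2) := (Nat.choose_symm hk2).symm
  have goalR : (Nat.choose n (k^2) : ℝ) * ((n:ℝ)+1)^(2*k) < (2:ℝ)^(k^2) := by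
    have e1 : ((n:ℝ)+1)^(2*k) = Real.exp ((2*k) * Real.log ((n:ℝ)+1)) := by
      rw [← Real.exp_log (show (0:ℝ) < (n:ℝ)+1 by linarith), ← Real.exp_nat_mul,
        Real.exp_log (show (0:ℝ) < (n:ℝ)+1 by linarith)]
      push_cast; ring_nf
    have e2 : (2:ℝ)^(k^2) = Real.exp ((k^2 : ℕ) * Real.log 2) := by
      rw [← Real.exp_log (show (0:ℝ) < 2 by norm_num), ← Real.exp_nat_mul,
        Real.exp_log (show (0:ℝ) < 2 by norm_num)]
    rw [e1, e2, hsymm]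
    calc (Nat.choose n (n-k^2) : ℝ) * Real.exp ((2*k) * Real.log ((n:ℝ)+1))
        ≤ Real.exp (((n:ℝ)/5) * (Real.log 5 + 1)) * Real.exp ((2*k) * Real.log ((n:ℝ)+1)) := by
          apply mul_le_mul_of_nonneg_right hchoose (Real.exp_pos _).le
      _ = Real.exp (((n:ℝ)/5) * (Real.log 5 + 1) + (2*k) * Real.log ((n:ℝ)+1)) :=
          (Real.exp_add _ _).symm
      _ < Real.exp (((k^2 : ℕ) : ℝ) * Real.log 2) := by
          apply Real.exp_lt_exp.mpr
          have hb1 : (2*(k:ℝ)) * Real.log ((n:ℝ)+1) ≤ 2 * Real.sqrt n * (2 * Real.log n) := by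
            apply mul_le_mul (by linarith) hlogn1 hlogn1nn (by positivity)
          have hb2 : 2 * Real.sqrt n * (2 * Real.log n)
              ≤ 4 * ((c/100) * (Real.sqrt n * Real.sqrt n)) := by
            nlinarith [hlogn, hsqnn]
          have hb3 : 4 * ((c/100) * (Real.sqrt n * Real.sqrt n)) = (c/25) * n := by
            rw [hsq]; ring
          have hk45R : 4 * (n:ℝ) ≤ 5 * (k:ℝ)^2 := by exact_mod_cast hk45
          have hklog : ((4:ℝ)*n/5) * Real.log 2 ≤ ((k:ℝ)^2) * Real.log 2 := by
            apply mul_le_mul_of_nonneg_right (by linarith) (by linarith)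
          have hfirst : ((n:ℝ)/5) * (Real.log 5 + 1) ≤ ((n:ℝ)/5) * (2*Real.log 2 + 5/4) := by
            apply mul_le_mul_of_nonneg_left (by linarith) (by positivity)
          have hcn : (c/25) * n < (c/5) * n := by
            apply mul_lt_mul_of_pos_right _ hnpos
            linarith
          push_cast
          nlinarith [hb1, hb2, hklog, hfirst, hcn]
  have hfin : (Nat.choose n (k^2) * (n+1)^(2*k) : ℝ) < ((2:ℕ):ℝ)^(k^2) := by
    push_cast
    push_cast at goalR
    linarith
  exact_mod_cast hfin

end AuxProperCode

/-- for `n` sufficiently large and `n ≥ k² ≥ 0.8·n`, there is an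
`(n, k²)`-proper code (a family `x_S`, indexed by the sets `S` of size `k²`, with the
support of `x_S` contained in `S`) whose codewords are pairwise at Hamming distance at
least `2k + 1`. -/
theorem exists_proper_code :
    ∃ N : ℕ, ∀ n : ℕ, N ≤ n → ∀ k : ℕ, k ^ 2 ≤ n → (0.8 : ℝ) * (n : ℝ) ≤ ((k ^ 2 : ℕ) : ℝ) →
      ∃ x : {S : Finset (Fin n) // S.card = k ^ 2} → (Fin n → Bool),
        (∀ S, ∀ ℓ : Fin n, x S ℓ = true → ℓ ∈ S.1) ∧
        (∀ S T, S ≠ T →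
          2 * k + 1 ≤ (Finset.univ.filter fun ℓ : Fin n => x S ℓ ≠ x T ℓ).card) := by
  obtain ⟨N, hN⟩ := aux_countBound
  refine ⟨N, fun n hn k hk2 h08 => ?_⟩
  have hk45 : 4*n ≤ 5*k^2 := by
    have hR : 4 * (n:ℝ) ≤ 5 * ((k^2 : ℕ) : ℝ) := by
      push_cast at h08 ⊢
      linarith
    exact_mod_cast hR
  obtain ⟨x, hsupp, hdist⟩ := aux_greedy n k (hN n hn k hk2 hk45) Finset.univ
  exact ⟨x, hsupp, fun S T hST =>
    hdist S (Finset.mem_univ S) T (Finset.mem_univ T) hST⟩
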